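/- For real numbers λ₁,…,λₙ with H₁, H₂, …, H_r > 0 for some 1 < r ≤ n, the chain of Maclaurin inequalities holds: H₁ ≥ H₂^{1/2} ≥ H₃^{1/3} ≥ … ≥ H_r^{1/r}. -/

import Mathlib

/-- The `r`-th elementary symmetric polynomial of `v`. -/
noncomputable def esymm (n r : ℕ) (v : Fin n → ℝ) : ℝ :=
  ∑ s ∈ Finset.powersetCard r Finset.univ, ∏ i ∈ s, v i

/-- Normalized symmetric function `H_r = S_r / C(n,r)`. -/
noncomputable def Hsym (n r : ℕ) (v : Fin n → ℝ) : ℝ :=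
  esymm n r v / (n.choose r : ℝ)

open Finset

lemma sq_sum_identity {ι : Type*} [DecidableEq ι] (u : Finset ι) (w : ι → ℝ) :
    (∑ i ∈ u, w i) ^ 2 = (∑ i ∈ u, w i ^ 2)
      + 2 * ∑ t ∈ u.powersetCard 2, ∏ i ∈ t, w i := by
  induction u using Finset.induction with
  | empty =>
    simp [Finset.powersetCard_eq_empty.mpr (by simp : (2:ℕ) > #(∅ : Finset ι))]
  | @insert a u ha ih =>
    rw [Finset.sum_insert ha, Finset.sum_insert ha, Finset.powersetCard_succ_insert ha,
      Finset.sum_union, Finset.sum_image, add_sq]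
    · have h1 : ∀ t ∈ u.powersetCard 1, ∏ i ∈ insert a t, w i = w a * ∏ i ∈ t, w i := by
        intro t ht
        rw [Finset.prod_insert]
        intro hat
        exact ha ((Finset.mem_powersetCard.mp ht).1 hat)
      rw [Finset.sum_congr rfl h1, ← Finset.mul_sum]
      have h2 : ∑ t ∈ u.powersetCard 1, ∏ i ∈ t, w i = ∑ i ∈ u, w i := by
        rw [Finset.powersetCard_one, Finset.sum_map]
        simp
      rw [h2, ih]; ring
    · intro s hs t ht hst
      have hsu := (Finset.mem_powersetCard.mp hs).1
      have htu := (Finset.mem_powersetCard.mp ht).1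
      have has : a ∉ s := fun h => ha (hsu h)
      have hat : a ∉ t := fun h => ha (htu h)
      rw [← Finset.erase_insert has, ← Finset.erase_insert hat, hst]
    · rw [Finset.disjoint_left]
      intro s hs hs2
      have : a ∉ s := fun h => ha ((Finset.mem_powersetCard.mp hs).1 h)
      obtain ⟨t, ht, rfl⟩ := Finset.mem_image.mp hs2
      exact this (Finset.mem_insert_self a t)


lemma compl_sum (m c : ℕ) (hc : c ≤ m) (v : Fin m → ℝ) :
    ∑ t ∈ Finset.powersetCard c (Finset.univ : Finset (Fin m)),
      ∏ i ∈ Finset.univ \ t, v i = esymm m (m - c) v := by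
  unfold esymm
  refine Finset.sum_nbij' (fun t => Finset.univ \ t) (fun t => Finset.univ \ t) ?_ ?_ ?_ ?_ ?_
  · intro t ht
    rw [Finset.mem_powersetCard_univ] at *
    rw [Finset.card_univ_diff, ht, Fintype.card_fin]
  · intro t ht
    rw [Finset.mem_powersetCard_univ] at *
    rw [Finset.card_univ_diff, ht, Fintype.card_fin]
    omega
  · intro t ht
    simp [sdiff_sdiff_right_self, Finset.inf_eq_inter, Finset.univ_inter]
  · intro t ht
    simp [sdiff_sdiff_right_self, Finset.inf_eq_inter, Finset.univ_inter]
  · intro t ht; rfl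

lemma sum_cofactor (m : ℕ) (v : Fin m → ℝ) (hm : 1 ≤ m) :
    ∑ i : Fin m, ∏ j ∈ Finset.univ.erase i, v j = esymm m (m - 1) v := by
  rw [← compl_sum m 1 hm v, Finset.powersetCard_one, Finset.sum_map]
  simp [Finset.sdiff_singleton_eq_erase]

lemma pair_cofactor (m : ℕ) (v : Fin m → ℝ) (hm : 2 ≤ m) :
    2 * (esymm m (m - 2) v * esymm m m v) =
      (∑ i : Fin m, ∏ j ∈ Finset.univ.erase i, v j) ^ 2
        - ∑ i : Fin m, (∏ j ∈ Finset.univ.erase i, v j) ^ 2 := by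
  set B : Fin m → ℝ := fun i => ∏ j ∈ Finset.univ.erase i, v j with hB
  rw [sq_sum_identity Finset.univ B]
  have key : ∀ t ∈ Finset.powersetCard 2 (Finset.univ : Finset (Fin m)),
      ∏ i ∈ t, B i = esymm m m v * ∏ i ∈ Finset.univ \ t, v i := by
    intro t ht
    rw [Finset.mem_powersetCard_univ] at ht
    obtain ⟨a, b, hab, rfl⟩ := Finset.card_eq_two.mp ht
    rw [Finset.prod_pair hab]
    have hEm : esymm m m v = ∏ i, v i := by
      unfold esymm
      have hcu : Finset.powersetCard m (Finset.univ : Finset (Fin m)) = {Finset.univ} := by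
        have h := Finset.powersetCard_self (Finset.univ : Finset (Fin m))
        rwa [Finset.card_univ, Fintype.card_fin] at h
      rw [hcu, Finset.sum_singleton]
    have hBa : B a = v b * ∏ j ∈ Finset.univ \ {a, b}, v j := by
      show ∏ j ∈ Finset.univ.erase a, v j = _
      have : Finset.univ.erase a = insert b (Finset.univ \ {a, b}) := by
        ext x
        simp [Finset.mem_erase, Finset.mem_insert, Finset.mem_sdiff]
        constructor
        · intro hx; by_cases hxb : x = b; · left; exact hxb
          right; tauto
        · rintro (rfl | hx) <;> tauto
      rw [this, Finset.prod_insert (by simp)]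
    have hBb : B b = v a * ∏ j ∈ Finset.univ \ {a, b}, v j := by
      show ∏ j ∈ Finset.univ.erase b, v j = _
      have : Finset.univ.erase b = insert a (Finset.univ \ {a, b}) := by
        ext x
        simp [Finset.mem_erase, Finset.mem_insert, Finset.mem_sdiff]
        constructor
        · intro hx; by_cases hxa : x = a; · left; exact hxa
          right; tauto
        · rintro (rfl | hx) <;> tauto
      rw [this, Finset.prod_insert (by simp)]
    have hEm2 : esymm m m v = v a * v b * ∏ j ∈ Finset.univ \ {a, b}, v j := by
      rw [hEm]
      have : (Finset.univ : Finset (Fin m)) = insert a (insert b (Finset.univ \ {a, b})) := by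
        ext x
        simp [Finset.mem_insert, Finset.mem_sdiff]
        by_cases hxa : x = a; · tauto
        by_cases hxb : x = b <;> tauto
      conv_lhs => rw [this]
      rw [Finset.prod_insert (by simp [hab]), Finset.prod_insert (by simp), mul_assoc]
    rw [hBa, hBb, hEm2]; ring
  rw [Finset.sum_congr rfl key, ← Finset.mul_sum, compl_sum m 2 hm v]
  ring

lemma newton_base (m : ℕ) (v : Fin m → ℝ) (hm : 2 ≤ m) :
    (2 * m : ℝ) * (esymm m (m - 2) v * esymm m m v)
      ≤ ((m : ℝ) - 1) * esymm m (m - 1) v ^ 2 := by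
  have h1 := pair_cofactor m v hm
  have h2 := sum_cofactor m v (by omega)
  set B : Fin m → ℝ := fun i => ∏ j ∈ Finset.univ.erase i, v j with hB
  have hcs : (∑ i : Fin m, B i) ^ 2 ≤ (m : ℝ) * ∑ i : Fin m, B i ^ 2 := by
    have := sq_sum_le_card_mul_sum_sq (s := (Finset.univ : Finset (Fin m))) (f := B)
    simpa using this
  have h1' : 2 * (esymm m (m - 2) v * esymm m m v)
      = (∑ i : Fin m, B i) ^ 2 - ∑ i : Fin m, B i ^ 2 := h1
  have hQ : ∑ i : Fin m, B i ^ 2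
      = (∑ i : Fin m, B i) ^ 2 - 2 * (esymm m (m - 2) v * esymm m m v) := by linarith
  rw [hQ] at hcs
  rw [← h2]
  nlinarith [hcs]

lemma esymm_coe (l : List ℝ) (j : ℕ) :
    (↑l : Multiset ℝ).esymm j = esymm l.length j l.get := by
  have h : (Finset.univ.val.map l.get) = (↑l : Multiset ℝ) := by
    have : Finset.univ.val = (↑(List.finRange l.length) : Multiset (Fin l.length)) := rfl
    rw [this]
    rw [Multiset.map_coe, ← List.ofFn_eq_map, List.ofFn_get]
  rw [← h, Finset.esymm_map_val]
  rfl

open Polynomial in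
lemma exists_deriv_roots (s : Multiset ℝ) (hs : 2 ≤ Multiset.card s) :
    ∃ t : Multiset ℝ, Multiset.card t = Multiset.card s - 1 ∧
      ∀ j ≤ Multiset.card s - 1,
        (Multiset.card s : ℝ) * t.esymm j
          = ((Multiset.card s : ℝ) - (j : ℝ)) * s.esymm j := by
  classical
  set m := Multiset.card s with hm
  set p : ℝ[X] := (s.map fun a => X - C a).prod with hp
  have hdeg : p.natDegree = m := by
    rw [hp, natDegree_multiset_prod_X_sub_C_eq_card]
  have hroots : p.roots = s := roots_multiset_prod_X_sub_C s
  have hmonic : p.Monic := monic_multiset_prod_of_monic _ _ fun a _ => monic_X_sub_C a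
  have hcoeffm : p.coeff m = 1 := by rw [← hdeg]; exact hmonic.coeff_natDegree
  have hge : m - 1 ≤ Multiset.card (derivative p).roots := by
    have := p.card_roots_le_derivative
    rw [hroots] at this; omega
  have hle : Multiset.card (derivative p).roots ≤ m - 1 :=
    le_trans (derivative p).card_roots' (by simpa [hdeg] using natDegree_derivative_le p)
  have hcard : Multiset.card (derivative p).roots = m - 1 := le_antisymm hle hge
  have hndeg : (derivative p).natDegree = m - 1 := by
    refine le_antisymm (by simpa [hdeg] using natDegree_derivative_le p) ?_
    rw [← hcard]; exact (derivative p).card_roots'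
  have hlc : (derivative p).leadingCoeff = (m : ℝ) := by
    rw [leadingCoeff, hndeg, coeff_derivative, show m - 1 + 1 = m by omega, hcoeffm,
      Nat.cast_sub (by omega : 1 ≤ m)]
    ring
  have hfac := C_leadingCoeff_mul_prod_multiset_X_sub_C (p := derivative p)
    (by rw [hcard, hndeg])
  refine ⟨(derivative p).roots, hcard, ?_⟩
  intro j hj
  have h1 : (derivative p).coeff (m - 1 - j)
      = (-1) ^ j * s.esymm j * ((m : ℝ) - j) := by
    rw [coeff_derivative, show m - 1 - j + 1 = m - j by omega]
    rw [hp, Multiset.prod_X_sub_C_coeff s (by omega : m - j ≤ Multiset.card s),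
      show Multiset.card s - (m - j) = j by omega]
    have e : ((m - 1 - j : ℕ) : ℝ) = (m : ℝ) - (j : ℝ) - 1 := by
      rw [show m - 1 - j = m - (j + 1) by omega, Nat.cast_sub (by omega : j + 1 ≤ m)]
      push_cast; ring
    rw [e]; ring
  have h2 : (derivative p).coeff (m - 1 - j)
      = (m : ℝ) * ((-1) ^ j * (derivative p).roots.esymm j) := by
    conv_lhs => rw [← hfac]
    rw [coeff_C_mul, hlc,
      Multiset.prod_X_sub_C_coeff _ (by rw [hcard]; omega : m - 1 - j ≤ Multiset.card (derivative p).roots),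
      hcard, show m - 1 - (m - 1 - j) = j by omega]
  have hne : ((-1 : ℝ) ^ j) ≠ 0 := pow_ne_zero _ (by norm_num)
  have key := h1.symm.trans h2
  have key2 : ((-1 : ℝ) ^ j) * ((m : ℝ) * (derivative p).roots.esymm j)
      = ((-1 : ℝ) ^ j) * (((m : ℝ) - (j : ℝ)) * s.esymm j) := by
    linear_combination -key
  exact mul_left_cancel₀ hne key2

noncomputable def Hs (s : Multiset ℝ) (j : ℕ) : ℝ :=
  s.esymm j / ((Multiset.card s).choose j : ℝ)

lemma newtonM : ∀ (d k : ℕ) (s : Multiset ℝ), 1 ≤ k → Multiset.card s = k + 1 + d →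
    Hs s (k - 1) * Hs s (k + 1) ≤ Hs s k ^ 2 := by
  intro d
  induction d with
  | zero =>
    intro k s hk hcard
    obtain ⟨l, rfl⟩ : ∃ l : List ℝ, s = ↑l := ⟨s.toList, s.coe_toList.symm⟩
    have hlen : l.length = k + 1 := by simpa using hcard
    set m := l.length with hmdef
    have hm2 : 2 ≤ m := by omega
    have hbase := newton_base m l.get hm2
    have hc : ∀ j, Hs (↑l) j = esymm m j l.get / ((m.choose j : ℕ) : ℝ) := by
      intro j
      rw [Hs, esymm_coe]
      simp [hmdef]
      rfl
    have e1 : k - 1 = m - 2 := by omega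
    have e2 : k + 1 = m := by omega
    have e3 : k = m - 1 := by omega
    rw [hc, hc, hc, e1, e2, e3]
    have hs1 : m.choose m = 1 := Nat.choose_self m
    have hs2 : m.choose (m - 1) = m := by
      rw [Nat.choose_symm (by omega : 1 ≤ m), Nat.choose_one_right]
    have hs3 : (m.choose (m - 2)) = m.choose 2 := Nat.choose_symm (by omega : 2 ≤ m)
    have hs4 : (m.choose 2 : ℝ) * 2 = (m : ℝ) * ((m : ℝ) - 1) := by
      have h : m.choose 2 * 2 = m * (m - 1) := by
        rw [Nat.choose_two_right]
        refine Nat.div_mul_cancel ?_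
        have := Nat.even_mul_succ_self (m - 1)
        rw [show m - 1 + 1 = m by omega] at this
        exact (Nat.mul_comm (m - 1) m ▸ this).two_dvd
      have := congrArg (fun x : ℕ => (x : ℝ)) h
      push_cast [Nat.cast_sub (by omega : 1 ≤ m)] at this
      linarith [this]
    have hpos2 : (0 : ℝ) < (m.choose 2 : ℝ) := by
      have : 0 < m.choose 2 := Nat.choose_pos (by omega)
      exact_mod_cast this
    have hposm : (0 : ℝ) < (m : ℝ) := by positivity
    rw [hs1, hs2, hs3]
    rw [div_mul_div_comm, div_pow, div_le_div_iff₀ (by positivity) (by positivity)]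
    push_cast
    nlinarith [hbase, hpos2, hposm, sq_nonneg (esymm m (m-1) l.get)]
  | succ d ih =>
    intro k s hk hcard
    obtain ⟨t, htcard, ht⟩ := exists_deriv_roots s (by omega)
    have hHs : ∀ j ≤ Multiset.card s - 1, Hs t j = Hs s j := by
      intro j hj
      rw [Hs, Hs, htcard]
      have hch : ((Multiset.card s - 1).choose j : ℝ) * (Multiset.card s : ℝ)
          = ((Multiset.card s).choose j : ℝ) * ((Multiset.card s : ℝ) - (j : ℝ)) := by
        have h := Nat.choose_mul_succ_eq (Multiset.card s - 1) j
        rw [show Multiset.card s - 1 + 1 = Multiset.card s by omega] at h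
        have := congrArg (fun x : ℕ => (x : ℝ)) h
        push_cast [Nat.cast_sub (by omega : j ≤ Multiset.card s)] at this
        linarith [this]
      have hm0 : (Multiset.card s : ℝ) ≠ 0 := by
        have : 0 < Multiset.card s := by omega
        positivity
      have hEt := ht j hj
      by_cases hjle : j ≤ Multiset.card s - 1
      · have hc1 : (0:ℝ) < ((Multiset.card s - 1).choose j : ℝ) := by
          exact_mod_cast Nat.choose_pos hjle
        have hc2 : (0:ℝ) < ((Multiset.card s).choose j : ℝ) := by
          exact_mod_cast Nat.choose_pos (by omega)
        rw [div_eq_div_iff hc1.ne' hc2.ne']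
        apply mul_left_cancel₀ hm0
        calc (Multiset.card s : ℝ) * (t.esymm j * ((Multiset.card s).choose j : ℝ))
            = ((Multiset.card s : ℝ) * t.esymm j) * ((Multiset.card s).choose j : ℝ) := by ring
          _ = (((Multiset.card s : ℝ) - j) * s.esymm j) * ((Multiset.card s).choose j : ℝ) := by rw [hEt]
          _ = s.esymm j * (((Multiset.card s).choose j : ℝ) * ((Multiset.card s : ℝ) - (j:ℝ))) := by ring
          _ = s.esymm j * (((Multiset.card s - 1).choose j : ℝ) * (Multiset.card s : ℝ)) := by rw [hch]
          _ = (Multiset.card s : ℝ) * (s.esymm j * ((Multiset.card s - 1).choose j : ℝ)) := by ring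
      · omega
    rw [← hHs (k-1) (by omega), ← hHs (k+1) (by omega), ← hHs k (by omega)]
    exact ih k t hk (by omega)


lemma newton_tuple (n k : ℕ) (v : Fin n → ℝ) (hk : 1 ≤ k) (hkn : k + 1 ≤ n) :
    Hsym n (k - 1) v * Hsym n (k + 1) v ≤ Hsym n k v ^ 2 := by
  have hcard : Multiset.card (Finset.univ.val.map v) = n := by simp
  have hes : ∀ j, (Finset.univ.val.map v).esymm j = esymm n j v := by
    intro j
    rw [Finset.esymm_map_val]
    rfl
  have hH : ∀ j, Hs (Finset.univ.val.map v) j = Hsym n j v := by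
    intro j
    rw [Hs, hcard, hes]
    rfl
  rw [← hH, ← hH, ← hH]
  exact newtonM (n - (k + 1)) k _ hk (by omega)

lemma Hsym_zero (n : ℕ) (v : Fin n → ℝ) : Hsym n 0 v = 1 := by
  rw [Hsym, esymm]
  simp

/-- Maclaurin chain of inequalities: if `H₁,…,H_r > 0` then
`H₁ ≥ H₂^{1/2} ≥ … ≥ H_r^{1/r}`. -/
theorem maclaurin_chain (n r : ℕ) (hr : 1 < r) (hrn : r ≤ n) (lam : Fin n → ℝ)
    (hpos : ∀ j : ℕ, 1 ≤ j → j ≤ r → 0 < Hsym n j lam) :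
    ∀ j : ℕ, 1 ≤ j → j < r →
      Hsym n j lam ^ ((1 : ℝ) / j) ≥ Hsym n (j + 1) lam ^ ((1 : ℝ) / (j + 1)) := by
  have claim : ∀ j : ℕ, 1 ≤ j → j + 1 ≤ r →
      Hsym n (j + 1) lam ^ j ≤ Hsym n j lam ^ (j + 1) := by
    intro j hj
    induction j, hj using Nat.le_induction with
    | base =>
      intro h2
      have hnewt := newton_tuple n 1 lam le_rfl (by omega)
      rw [show (1:ℕ) - 1 = 0 from rfl, Hsym_zero, one_mul] at hnewt
      simpa using hnewt
    | succ j hj ih =>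
      intro hjr
      have ihh := ih (by omega)
      set a := Hsym n j lam with ha
      set b := Hsym n (j + 1) lam with hb
      set c := Hsym n (j + 2) lam with hc
      have hapos : 0 < a := hpos j hj (by omega)
      have hbpos : 0 < b := hpos (j + 1) (by omega) (by omega)
      have hcpos : 0 < c := hpos (j + 2) (by omega) (by omega)
      have hnewt := newton_tuple n (j + 1) lam (by omega) (by omega)
      rw [show j + 1 - 1 = j from rfl, show j + 1 + 1 = j + 2 from rfl,
        ← ha, ← hb, ← hc] at hnewt
      -- goal : c ^ (j+1) ≤ b ^ (j+2)
      show c ^ (j + 1) ≤ b ^ (j + 1 + 1)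
      have h1 : c ≤ b ^ 2 / a := (le_div_iff₀ hapos).mpr (by linarith)
      have h2 : c ^ (j + 1) ≤ (b ^ 2 / a) ^ (j + 1) :=
        pow_le_pow_left₀ hcpos.le h1 _
      have h3 : (b ^ 2 / a) ^ (j + 1) = b ^ (2 * (j + 1)) / a ^ (j + 1) := by
        rw [div_pow, ← pow_mul]
      have h4 : b ^ (2 * (j + 1)) / a ^ (j + 1) ≤ b ^ (j + 2) := by
        rw [div_le_iff₀ (by positivity)]
        calc b ^ (2 * (j + 1)) = b ^ (j + 2) * b ^ j := by rw [← pow_add]; ring_nf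
          _ ≤ b ^ (j + 2) * a ^ (j + 1) := by
              exact mul_le_mul_of_nonneg_left ihh (by positivity)
      calc c ^ (j + 1) ≤ (b ^ 2 / a) ^ (j + 1) := h2
        _ = b ^ (2 * (j + 1)) / a ^ (j + 1) := h3
        _ ≤ b ^ (j + 2) := h4
  intro j hj hjr
  have hpow := claim j hj (by omega)
  have hapos : 0 < Hsym n j lam := hpos j hj (by omega)
  have hbpos : 0 < Hsym n (j + 1) lam := hpos (j + 1) (by omega) (by omega)
  have hj0 : (0 : ℝ) < (j : ℝ) := by exact_mod_cast hj
  have e1 : Hsym n j lam ^ ((1:ℝ)/j)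
      = (Hsym n j lam ^ (j + 1 : ℕ)) ^ ((1:ℝ)/((j:ℝ)*((j:ℝ)+1))) := by
    rw [← Real.rpow_natCast (Hsym n j lam) (j+1), ← Real.rpow_mul hapos.le]
    congr 1
    push_cast
    field_simp
  have e2 : Hsym n (j+1) lam ^ ((1:ℝ)/((j:ℝ)+1))
      = (Hsym n (j+1) lam ^ (j : ℕ)) ^ ((1:ℝ)/((j:ℝ)*((j:ℝ)+1))) := by
    rw [← Real.rpow_natCast (Hsym n (j+1) lam) j, ← Real.rpow_mul hbpos.le]
    congr 1
    push_cast
    field_simp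
  rw [ge_iff_le, show ((j:ℝ)+1) = (((j:ℕ):ℝ)+1) by push_cast; ring] at *
  rw [e1, e2]
  exact Real.rpow_le_rpow (by positivity) hpow (by positivity)
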